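/- Let u : [0,1] → ℝ be continuously differentiable, let λ ∈ (0,1], and suppose u satisfies the Sturm–Liouville boundary conditions −α·u(0) + β·u̇(0) = A and a·u(1) + b·u̇(1) = B with α, β, a, b > 0. If the function |u| achieves its maximum over [0,1] at the point 0, then u(0)·u̇(0) ≤ 0 and consequently |u(0)| ≤ |A/α|; similarly, if |u| achieves its maximum at the point 1, then |u(1)| ≤ |B/a|. -/
import Mathlib


open Set Filter Topology

lemma sq_max_deriv_sign (u u' : ℝ → ℝ)
    (hu : ∀ t ∈ Icc (0:ℝ) 1, HasDerivWithinAt u (u' t) (Icc (0:ℝ) 1) t)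
    (p : ℝ) (hp : p ∈ Icc (0:ℝ) 1) (q : ℝ) (hq : q ∈ Icc (0:ℝ) 1)
    (hmax : ∀ t ∈ Icc (0:ℝ) 1, |u t| ≤ |u p|) :
    (q - p) * (u' p * u p + u p * u' p) ≤ 0 := by
  have hf : HasDerivWithinAt (fun t => u t * u t) (u' p * u p + u p * u' p)
      (Icc (0:ℝ) 1) p := (hu p hp).mul (hu p hp)
  have hmax' : IsLocalMaxOn (fun t => u t * u t) (Icc (0:ℝ) 1) p := by
    apply eventually_nhdsWithin_of_forall
    intro t ht'
    have := hmax t ht'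
    have h2 : |u t| * |u t| ≤ |u p| * |u p| := mul_self_le_mul_self (abs_nonneg _) this
    simpa [abs_mul_abs_self] using h2
  have hcone : q - p ∈ posTangentConeAt (Icc (0:ℝ) 1) p := by
    apply sub_mem_posTangentConeAt_of_segment_subset
    exact (convex_Icc (0:ℝ) 1).segment_subset hp hq
  have := hmax'.hasFDerivWithinAt_nonpos hf.hasFDerivWithinAt hcone
  simpa [smul_eq_mul, mul_comm] using this

/-- Boundary estimates in the Sturm–Liouville case: if `|u|` achieves its maximum
over `[0,1]` at `0` then `u(0)·u̇(0) ≤ 0` and `|u(0)| ≤ |A/α|`; if it achieves its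
maximum at `1` then `|u(1)| ≤ |B/a|`. -/
theorem sturm_liouville_boundary_estimates
    (u u' : ℝ → ℝ)
    (hu : ∀ t ∈ Icc (0:ℝ) 1, HasDerivWithinAt u (u' t) (Icc (0:ℝ) 1) t)
    (hu' : ContinuousOn u' (Icc (0:ℝ) 1))
    (lam : ℝ) (hlam : lam ∈ Ioc (0:ℝ) 1)
    (A B α β a b : ℝ) (hα : 0 < α) (hβ : 0 < β) (ha : 0 < a) (hb : 0 < b)
    (hbc0 : -α * u 0 + β * u' 0 = A)
    (hbc1 : a * u 1 + b * u' 1 = B) :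
    ((∀ t ∈ Icc (0:ℝ) 1, |u t| ≤ |u 0|) → u 0 * u' 0 ≤ 0 ∧ |u 0| ≤ |A / α|) ∧
    ((∀ t ∈ Icc (0:ℝ) 1, |u t| ≤ |u 1|) → |u 1| ≤ |B / a|) := by
  have h01 : (0:ℝ) ∈ Icc (0:ℝ) 1 := ⟨le_refl 0, zero_le_one⟩
  have h11 : (1:ℝ) ∈ Icc (0:ℝ) 1 := ⟨zero_le_one, le_refl 1⟩
  constructor
  · intro hmax
    have key := sq_max_deriv_sign u u' hu 0 h01 1 h11 hmax
    have hsign : u 0 * u' 0 ≤ 0 := by nlinarith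
    refine ⟨hsign, ?_⟩
    have h1 : α * |u 0| ≤ |A| := by
      rcases lt_trichotomy (u 0) 0 with h | h | h
      · have hd : 0 ≤ u' 0 := by nlinarith
        rw [abs_of_neg h]
        have : -A ≤ |A| := neg_le_abs A
        have hA : 0 ≤ A := by nlinarith
        have : A ≤ |A| := le_abs_self A
        nlinarith
      · rw [h]
        simp
      · have hd : u' 0 ≤ 0 := by nlinarith
        rw [abs_of_pos h]
        have : -A ≤ |A| := neg_le_abs A
        nlinarith
    rw [abs_div, abs_of_pos hα, le_div_iff₀ hα]
    linarith [h1, mul_comm α (|u 0|)]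
  · intro hmax
    have key := sq_max_deriv_sign u u' hu 1 h11 0 h01 hmax
    have hsign : 0 ≤ u 1 * u' 1 := by nlinarith
    have h1 : a * |u 1| ≤ |B| := by
      rcases lt_trichotomy (u 1) 0 with h | h | h
      · have hd : u' 1 ≤ 0 := by nlinarith
        rw [abs_of_neg h]
        have : -B ≤ |B| := neg_le_abs B
        nlinarith
      · rw [h]
        simp
      · have hd : 0 ≤ u' 1 := by nlinarith
        rw [abs_of_pos h]
        have : B ≤ |B| := le_abs_self B
        nlinarith
    rw [abs_div, abs_of_pos ha, le_div_iff₀ ha]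
    linarith [h1, mul_comm a (|u 1|)]
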